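/- Let u ≥ 2 and ℓ ≥ 1 be integers, let c ≥ 1, ρ ≥ 1, and u' ≥ u be reals, and let A_1, …, A_ℓ be nonempty subsets of [1, u]. If Σ_{i=1}^ℓ |A_i| ≥ ℓ + 4cρu'·log u', then there exists an integer k with 2 ≤ k ≤ u such that at least 2cρu'/k of the sets A_1, …, A_ℓ have size at least k. -/

import Mathlib

lemma harmonic_le_log : ∀ u : ℕ, 1 ≤ u →
    ∑ k ∈ Finset.Icc 2 u, (1:ℝ)/k ≤ Real.log u := by
  intro u hu
  induction u with
  | zero => omega
  | succ n ih =>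
    rcases Nat.eq_or_lt_of_le hu with h | h
    · have : n = 0 := by omega
      subst this
      simp
    · have hn : 1 ≤ n := by omega
      have ihn := ih hn
      rw [Finset.sum_Icc_succ_top (by omega : 2 ≤ n+1)]
      have hpos : (0:ℝ) < (n:ℝ)/((n:ℝ)+1) := by positivity
      have hlog := Real.log_le_sub_one_of_pos hpos
      rw [Real.log_div (by positivity) (by positivity)] at hlog
      have h1 : (n:ℝ)/((n:ℝ)+1) - 1 = -(1/((n:ℝ)+1)) := by
        field_simp
        ring
      rw [h1] at hlog
      push_cast
      linarith

theorem stmt5 (u ℓ : ℕ) (hu : 2 ≤ u) (hℓ : 1 ≤ ℓ) (c ρ u' : ℝ)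
    (hc : 1 ≤ c) (hρ : 1 ≤ ρ) (hu' : (u : ℝ) ≤ u')
    (A : Fin ℓ → Finset ℕ) (hA : ∀ i, (A i).Nonempty)
    (hsub : ∀ i, A i ⊆ Finset.Icc 1 u)
    (hsum : (ℓ : ℝ) + 4 * c * ρ * u' * Real.logb 2 u' ≤ ∑ i, ((A i).card : ℝ)) :
    ∃ k : ℕ, 2 ≤ k ∧ k ≤ u ∧
      2 * c * ρ * u' / k ≤ ((Finset.univ.filter fun i => k ≤ (A i).card).card : ℝ) := by
  by_contra hcon
  push_neg at hcon
  set N : ℕ → ℕ := fun k => (Finset.univ.filter fun i => k ≤ (A i).card).card with hN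
  -- each card as a sum of indicators over Icc 1 u
  have hcard : ∀ i, (A i).card = ∑ k ∈ Finset.Icc 1 u, if k ≤ (A i).card then 1 else 0 := by
    intro i
    have h1 : 1 ≤ (A i).card := (hA i).card_pos
    have h2 : (A i).card ≤ u := by
      have := Finset.card_le_card (hsub i)
      simpa using this
    rw [← Finset.card_filter]
    have : (Finset.Icc 1 u).filter (fun k => k ≤ (A i).card) = Finset.Icc 1 ((A i).card) := by
      ext k
      simp only [Finset.mem_filter, Finset.mem_Icc]
      omega
    rw [this, Nat.card_Icc]
    omega
  have hswap : ∑ i, (A i).card = ∑ k ∈ Finset.Icc 1 u, N k := by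
    calc ∑ i, (A i).card
        = ∑ i, ∑ k ∈ Finset.Icc 1 u, if k ≤ (A i).card then 1 else 0 :=
          Finset.sum_congr rfl (fun i _ => hcard i)
      _ = ∑ k ∈ Finset.Icc 1 u, ∑ i, if k ≤ (A i).card then 1 else 0 := Finset.sum_comm
      _ = ∑ k ∈ Finset.Icc 1 u, N k := by
          refine Finset.sum_congr rfl fun k _ => ?_
          exact (Finset.card_filter _ _).symm
  have hins : Finset.Icc 1 u = insert 1 (Finset.Icc 2 u) := by
    ext k
    simp only [Finset.mem_Icc, Finset.mem_insert]
    omega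
  have hN1 : N 1 = ℓ := by
    have : (Finset.univ.filter fun i : Fin ℓ => 1 ≤ (A i).card) = Finset.univ := by
      refine Finset.filter_true_of_mem fun i _ => (hA i).card_pos
    show (Finset.univ.filter fun i : Fin ℓ => 1 ≤ (A i).card).card = ℓ
    rw [this, Finset.card_univ, Fintype.card_fin]
  have hsplit : ∑ i, (A i).card = ℓ + ∑ k ∈ Finset.Icc 2 u, N k := by
    rw [hswap, hins, Finset.sum_insert (by simp), hN1]
  -- real version
  have hsplitR : ∑ i, ((A i).card : ℝ) = (ℓ:ℝ) + ∑ k ∈ Finset.Icc 2 u, (N k : ℝ) := by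
    have := congrArg (fun n : ℕ => (n:ℝ)) hsplit
    push_cast at this
    simpa using this
  have hne : (Finset.Icc 2 u).Nonempty := ⟨2, by simp [Finset.mem_Icc]; omega⟩
  have hlt : ∑ k ∈ Finset.Icc 2 u, (N k : ℝ) <
      ∑ k ∈ Finset.Icc 2 u, 2 * c * ρ * u' / k := by
    refine Finset.sum_lt_sum_of_nonempty hne fun k hk => ?_
    rw [Finset.mem_Icc] at hk
    exact hcon k hk.1 hk.2
  have hsum_eq : ∑ k ∈ Finset.Icc 2 u, 2 * c * ρ * u' / k
      = 2 * c * ρ * u' * ∑ k ∈ Finset.Icc 2 u, (1:ℝ)/k := by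
    rw [Finset.mul_sum]
    exact Finset.sum_congr rfl fun k _ => by ring
  have hH : ∑ k ∈ Finset.Icc 2 u, (1:ℝ)/k ≤ Real.log u := harmonic_le_log u (by omega)
  have hu'2 : (2:ℝ) ≤ u' := le_trans (by exact_mod_cast hu) hu'
  have hlogu' : (0:ℝ) ≤ Real.log u' := Real.log_nonneg (by linarith)
  have hlog2 : Real.log u ≤ Real.logb 2 u' := by
    have h1 : Real.log u ≤ Real.log u' :=
      Real.log_le_log (by positivity) hu'
    have h2 : Real.log u' ≤ Real.logb 2 u' := by
      rw [Real.logb, le_div_iff₀ (Real.log_pos (by norm_num))]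
      nlinarith [Real.log_two_lt_d9, hlogu']
    linarith
  have hlogb_nonneg : (0:ℝ) ≤ Real.logb 2 u' :=
    le_trans (Real.log_nonneg (by exact_mod_cast Nat.one_le_cast.mpr (by omega : 1 ≤ u))) hlog2
  have hcρ : (1:ℝ) ≤ c * ρ := by nlinarith
  have hcρu' : (1:ℝ) ≤ c * ρ * u' := by nlinarith
  have hchain : ∑ k ∈ Finset.Icc 2 u, (N k : ℝ) < 4 * c * ρ * u' * Real.logb 2 u' := by
    have h1 : 2 * c * ρ * u' * ∑ k ∈ Finset.Icc 2 u, (1:ℝ)/k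
        ≤ 2 * c * ρ * u' * Real.logb 2 u' := by
      have := le_trans hH hlog2
      nlinarith
    nlinarith [hlt, hsum_eq]
  rw [hsplitR] at hsum
  linarith
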